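/- Let r be a real number and let (p_m, q_m)_{m≥1} be integers with p_m ≥ 2, q_m ≥ 1, satisfying 0 < |r·p_m − q_m| < p_m^{−m} for all m ≥ 1 and p_m^{−m} < |r·p_{m−1} − q_{m−1}| for all m ≥ 2, and set λ_m := r·p_m − q_m and f(s) := ∑_{m=1}^∞ m·p_m^{−m}·cos(2π·λ_m·s). Then for every n ≥ 1, lim_{t→+∞} (1/t)·∫_0^t f(s)·cos(2π·λ_n·s) ds = (n/2)·p_n^{−n}. -/

import Mathlib

open Real Filter MeasureTheory intervalIntegral

lemma aux_inv_mul_bounded {h : ℝ → ℝ} {C : ℝ} (hC : ∀ t, |h t| ≤ C) :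
    Tendsto (fun t : ℝ => t⁻¹ * h t) atTop (nhds 0) := by
  refine squeeze_zero_norm' (a := fun t => C * t⁻¹) ?_ ?_
  · filter_upwards [eventually_ge_atTop (0:ℝ)] with t ht
    have h1 : ‖t⁻¹ * h t‖ = |t⁻¹| * |h t| := abs_mul _ _
    rw [h1, abs_of_nonneg (inv_nonneg.mpr ht), mul_comm]
    exact mul_le_mul_of_nonneg_right (hC t) (inv_nonneg.mpr ht)
  · simpa using (tendsto_inv_atTop_zero).const_mul C

lemma aux_sin_div (x y : ℝ) : |Real.sin x / y| ≤ |y|⁻¹ := by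
  rw [abs_div, div_eq_mul_inv]
  calc |Real.sin x| * |y|⁻¹ ≤ 1 * |y|⁻¹ :=
        mul_le_mul_of_nonneg_right (Real.abs_sin_le_one x) (inv_nonneg.mpr (abs_nonneg y))
    _ = |y|⁻¹ := one_mul _

lemma aux_diag (A : ℝ) (hA : A ≠ 0) :
    Tendsto (fun t : ℝ => t⁻¹ * (t/2 + Real.sin (2*A*t)/(4*A))) atTop (nhds (1/2)) := by
  have h0 : Tendsto (fun t : ℝ => t⁻¹ * (Real.sin (2*A*t)/(4*A))) atTop (nhds 0) :=
    aux_inv_mul_bounded (fun t => aux_sin_div _ _)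
  have h2 : Tendsto (fun t : ℝ => 1/2 + t⁻¹ * (Real.sin (2*A*t)/(4*A))) atTop (nhds (1/2)) := by
    simpa using tendsto_const_nhds.add h0
  refine h2.congr' ?_
  filter_upwards [eventually_ne_atTop (0:ℝ)] with t ht
  have h3 : t⁻¹ * (t/2) = 1/2 := by
    rw [← mul_div_assoc, inv_mul_cancel₀ ht]
  rw [mul_add, h3]

lemma aux_offdiag (A B : ℝ) :
    Tendsto (fun t : ℝ => t⁻¹ * (Real.sin ((A-B)*t)/(2*(A-B)) + Real.sin ((A+B)*t)/(2*(A+B))))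
      atTop (nhds 0) :=
  aux_inv_mul_bounded (C := |2*(A-B)|⁻¹ + |2*(A+B)|⁻¹) (fun t =>
    (abs_add_le _ _).trans (add_le_add (aux_sin_div _ _) (aux_sin_div _ _)))

lemma integ_cos_cos (A B : ℝ) (hsub : A - B ≠ 0) (hadd : A + B ≠ 0) (t : ℝ) :
    ∫ s in (0:ℝ)..t, Real.cos (A*s) * Real.cos (B*s)
      = Real.sin ((A-B)*t)/(2*(A-B)) + Real.sin ((A+B)*t)/(2*(A+B)) := by
  have key : ∀ s : ℝ, HasDerivAt
      (fun u => Real.sin ((A-B)*u)/(2*(A-B)) + Real.sin ((A+B)*u)/(2*(A+B)))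
      (Real.cos (A*s) * Real.cos (B*s)) s := by
    intro s
    have h1 : HasDerivAt (fun u : ℝ => Real.sin ((A-B)*u)) (Real.cos ((A-B)*s) * (A-B)) s := by
      simpa [Function.comp_def] using (Real.hasDerivAt_sin ((A-B)*s)).comp s ((hasDerivAt_id s).const_mul (A-B))
    have h2 : HasDerivAt (fun u : ℝ => Real.sin ((A+B)*u)) (Real.cos ((A+B)*s) * (A+B)) s := by
      simpa [Function.comp_def] using (Real.hasDerivAt_sin ((A+B)*s)).comp s ((hasDerivAt_id s).const_mul (A+B))
    have h3 := (h1.div_const (2*(A-B))).add (h2.div_const (2*(A+B)))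
    refine h3.congr_deriv ?_
    rw [show (A-B)*s = A*s - B*s by ring, show (A+B)*s = A*s + B*s by ring,
      Real.cos_sub, Real.cos_add]
    field_simp
    ring
  rw [intervalIntegral.integral_eq_sub_of_hasDerivAt (fun s _ => key s)
    (((Real.continuous_cos.comp (continuous_const.mul continuous_id)).mul
      (Real.continuous_cos.comp (continuous_const.mul continuous_id))).intervalIntegrable 0 t)]
  simp

lemma integ_cos_sq (A : ℝ) (hA : A ≠ 0) (t : ℝ) :
    ∫ s in (0:ℝ)..t, Real.cos (A*s) * Real.cos (A*s)
      = t/2 + Real.sin (2*A*t)/(4*A) := by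
  have key : ∀ s : ℝ, HasDerivAt
      (fun u => u/2 + Real.sin (2*A*u)/(4*A))
      (Real.cos (A*s) * Real.cos (A*s)) s := by
    intro s
    have h1 : HasDerivAt (fun u : ℝ => Real.sin (2*A*u)) (Real.cos (2*A*s) * (2*A)) s := by
      simpa [Function.comp_def] using (Real.hasDerivAt_sin (2*A*s)).comp s ((hasDerivAt_id s).const_mul (2*A))
    have h3 := ((hasDerivAt_id s).div_const 2).add (h1.div_const (4*A))
    refine h3.congr_deriv ?_
    rw [show (2*A)*s = 2*(A*s) by ring, Real.cos_two_mul]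
    field_simp
    ring
  rw [intervalIntegral.integral_eq_sub_of_hasDerivAt (fun s _ => key s)
    (((Real.continuous_cos.comp (continuous_const.mul continuous_id)).mul
      (Real.continuous_cos.comp (continuous_const.mul continuous_id))).intervalIntegrable 0 t)]
  simp

lemma key_lemma (a L : ℕ → ℝ) (n : ℕ) (v : ℝ)
    (ha0 : a 0 = 0) (hanonneg : ∀ m, 0 ≤ a m) (hsum : Summable a)
    (hne : ∀ m, m ≠ 0 → m ≠ n → |L m| ≠ |L n|) (hLn : L n ≠ 0) (hn : n ≠ 0)
    (hv : a n * (1/2) = v) :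
    Tendsto (fun t : ℝ => t⁻¹ *
        ∫ s in (0:ℝ)..t, (∑' m : ℕ, a m * Real.cos (2 * π * L m * s)) *
          Real.cos (2 * π * L n * s)) atTop (nhds v) := by
  subst hv
  have hcont : ∀ m : ℕ, Continuous
      (fun s : ℝ => a m * Real.cos (2 * π * L m * s) * Real.cos (2 * π * L n * s)) := by
    intro m
    exact (continuous_const.mul
      (Real.continuous_cos.comp (continuous_const.mul continuous_id))).mul
      (Real.continuous_cos.comp (continuous_const.mul continuous_id))
  -- The interchange of sum and integral, for each t > 0
  have hEq : ∀ t : ℝ, 0 < t →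
      t⁻¹ * (∫ s in (0:ℝ)..t, (∑' m : ℕ, a m * Real.cos (2 * π * L m * s)) *
          Real.cos (2 * π * L n * s))
      = ∑' m : ℕ, a m * (t⁻¹ *
          ∫ s in (0:ℝ)..t, Real.cos (2 * π * L m * s) * Real.cos (2 * π * L n * s)) := by
    intro t ht
    have hb : ∀ (m : ℕ) (s : ℝ),
        ‖a m * Real.cos (2 * π * L m * s) * Real.cos (2 * π * L n * s)‖ ≤ a m := by
      intro m s
      rw [Real.norm_eq_abs, abs_mul, abs_mul, abs_of_nonneg (hanonneg m)]
      calc a m * |Real.cos (2 * π * L m * s)| * |Real.cos (2 * π * L n * s)|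
          ≤ a m * 1 * 1 :=
            mul_le_mul (mul_le_mul le_rfl (Real.abs_cos_le_one _) (abs_nonneg _) (hanonneg m))
              (Real.abs_cos_le_one _) (abs_nonneg _) (mul_nonneg (hanonneg m) zero_le_one)
        _ = a m := by ring
    have hInt : ∀ m : ℕ, Integrable
        (fun s : ℝ => a m * Real.cos (2 * π * L m * s) * Real.cos (2 * π * L n * s))
        (volume.restrict (Set.Ioc (0:ℝ) t)) := fun m => (hcont m).integrableOn_Ioc
    have hnorm : Summable (fun m : ℕ =>
        ∫ s in Set.Ioc (0:ℝ) t,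
          ‖a m * Real.cos (2 * π * L m * s) * Real.cos (2 * π * L n * s)‖) := by
      refine Summable.of_nonneg_of_le
        (fun m => integral_nonneg fun s => norm_nonneg _) (fun m => ?_) (hsum.mul_right t)
      calc (∫ s in Set.Ioc (0:ℝ) t,
            ‖a m * Real.cos (2 * π * L m * s) * Real.cos (2 * π * L n * s)‖)
          ≤ ∫ _ in Set.Ioc (0:ℝ) t, a m := by
            refine integral_mono_of_nonneg (ae_of_all _ fun s => norm_nonneg _)
              (integrable_const _) (ae_of_all _ fun s => hb m s)
        _ = a m * t := by
            rw [setIntegral_const, smul_eq_mul, Real.volume_real_Ioc_of_le ht.le,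
              sub_zero, mul_comm]
    rw [intervalIntegral.integral_of_le ht.le]
    have h1 : ∀ s : ℝ,
        (∑' m : ℕ, a m * Real.cos (2 * π * L m * s)) * Real.cos (2 * π * L n * s)
        = ∑' m : ℕ, a m * Real.cos (2 * π * L m * s) * Real.cos (2 * π * L n * s) :=
      fun s => (tsum_mul_right).symm
    simp_rw [h1]
    rw [← MeasureTheory.integral_tsum_of_summable_integral_norm hInt hnorm]
    rw [← tsum_mul_left]
    refine tsum_congr fun m => ?_
    rw [show (fun s : ℝ => a m * Real.cos (2 * π * L m * s) * Real.cos (2 * π * L n * s))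
        = fun s : ℝ => a m * (Real.cos (2 * π * L m * s) * Real.cos (2 * π * L n * s))
      from funext fun s => mul_assoc _ _ _]
    rw [MeasureTheory.integral_const_mul, ← intervalIntegral.integral_of_le ht.le]
    ring
  -- dominated convergence for the sum
  have hmain : Tendsto (fun t : ℝ => ∑' m : ℕ, a m * (t⁻¹ *
        ∫ s in (0:ℝ)..t, Real.cos (2 * π * L m * s) * Real.cos (2 * π * L n * s)))
      atTop (nhds (∑' m : ℕ, if m = n then a n * (1/2) else 0)) := by
    refine tendsto_tsum_of_dominated_convergence hsum (fun m => ?_) ?_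
    · by_cases hm0 : m = 0
      · subst hm0
        rw [if_neg (fun h => hn h.symm)]
        simpa [ha0] using (tendsto_const_nhds : Tendsto (fun _ : ℝ => (0:ℝ)) atTop (nhds 0))
      · by_cases hmn : m = n
        · subst hmn
          rw [if_pos rfl]
          have hc : 2 * π * L m ≠ 0 :=
            mul_ne_zero (mul_ne_zero two_ne_zero Real.pi_ne_zero) hLn
          simp_rw [integ_cos_sq (2 * π * L m) hc]
          exact (aux_diag (2 * π * L m) hc).const_mul (a m)
        · have hne' := hne m hm0 hmn
          have h1 : L m ≠ L n := fun h => hne' (by rw [h])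
          have h2 : L m ≠ -L n := fun h => hne' (by rw [h, abs_neg])
          have hsub : 2 * π * L m - 2 * π * L n ≠ 0 := by
            rw [show 2 * π * L m - 2 * π * L n = 2 * π * (L m - L n) by ring]
            exact mul_ne_zero (mul_ne_zero two_ne_zero Real.pi_ne_zero)
              (sub_ne_zero.mpr h1)
          have hadd : 2 * π * L m + 2 * π * L n ≠ 0 := by
            rw [show 2 * π * L m + 2 * π * L n = 2 * π * (L m + L n) by ring]
            refine mul_ne_zero (mul_ne_zero two_ne_zero Real.pi_ne_zero) ?_
            intro h
            exact h2 (by linarith [h])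
          simp_rw [integ_cos_cos (2 * π * L m) (2 * π * L n) hsub hadd]
          rw [if_neg hmn]
          simpa using (aux_offdiag (2 * π * L m) (2 * π * L n)).const_mul (a m)
    · filter_upwards [eventually_gt_atTop (0:ℝ)] with t ht m
      have hI : ‖∫ s in (0:ℝ)..t,
          Real.cos (2 * π * L m * s) * Real.cos (2 * π * L n * s)‖ ≤ 1 * |t - 0| := by
        refine intervalIntegral.norm_integral_le_of_norm_le_const fun s _ => ?_
        rw [Real.norm_eq_abs, abs_mul]
        exact mul_le_one₀ (Real.abs_cos_le_one _) (abs_nonneg _) (Real.abs_cos_le_one _)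
      rw [one_mul, sub_zero, abs_of_nonneg ht.le, Real.norm_eq_abs] at hI
      rw [Real.norm_eq_abs, abs_mul, abs_mul, abs_of_nonneg (hanonneg m),
        abs_of_nonneg (inv_nonneg.mpr ht.le)]
      have h2 : t⁻¹ * |∫ s in (0:ℝ)..t,
            Real.cos (2 * π * L m * s) * Real.cos (2 * π * L n * s)| ≤ t⁻¹ * t :=
        mul_le_mul_of_nonneg_left hI (inv_nonneg.mpr ht.le)
      calc a m * (t⁻¹ * |∫ s in (0:ℝ)..t,
            Real.cos (2 * π * L m * s) * Real.cos (2 * π * L n * s)|)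
          ≤ a m * (t⁻¹ * t) := mul_le_mul_of_nonneg_left h2 (hanonneg m)
        _ = a m := by rw [inv_mul_cancel₀ ht.ne']; ring
  rw [tsum_ite_eq] at hmain
  refine hmain.congr' ?_
  filter_upwards [eventually_gt_atTop (0:ℝ)] with t ht
  exact (hEq t ht).symm

theorem stmt14 (r : ℝ) (p q : ℕ → ℤ)
    (hp : ∀ m : ℕ, 1 ≤ m → 2 ≤ p m) (hq : ∀ m : ℕ, 1 ≤ m → 1 ≤ q m)
    (happrox : ∀ m : ℕ, 1 ≤ m →
      0 < |r * (p m : ℝ) - (q m : ℝ)| ∧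
      |r * (p m : ℝ) - (q m : ℝ)| < (((p m : ℝ)) ^ m)⁻¹)
    (hdec : ∀ m : ℕ, 2 ≤ m →
      (((p m : ℝ)) ^ m)⁻¹ < |r * (p (m - 1) : ℝ) - (q (m - 1) : ℝ)|) :
    ∀ n : ℕ, 1 ≤ n →
      Tendsto (fun t : ℝ => t⁻¹ *
        ∫ s in (0 : ℝ)..t,
          (∑' m : ℕ, (m : ℝ) * (((p m : ℝ)) ^ m)⁻¹ *
            Real.cos (2 * π * (r * (p m : ℝ) - (q m : ℝ)) * s)) *
          Real.cos (2 * π * (r * (p n : ℝ) - (q n : ℝ)) * s))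
        atTop (nhds ((n : ℝ) / 2 * (((p n : ℝ)) ^ n)⁻¹)) := by
  intro n hn
  have hp2 : ∀ m : ℕ, 1 ≤ m → (2:ℝ) ≤ (p m : ℝ) := by
    intro m hm; exact_mod_cast hp m hm
  have hppos : ∀ m : ℕ, 1 ≤ m → (0:ℝ) < ((p m : ℝ)) ^ m :=
    fun m hm => pow_pos (by linarith [hp2 m hm]) m
  have hanonneg : ∀ m : ℕ, 0 ≤ (m : ℝ) * (((p m : ℝ)) ^ m)⁻¹ := by
    intro m
    rcases Nat.eq_zero_or_pos m with h | h
    · subst h; simp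
    · exact mul_nonneg (Nat.cast_nonneg m) (inv_nonneg.mpr (hppos m h).le)
  have hsum : Summable (fun m : ℕ => (m : ℝ) * (((p m : ℝ)) ^ m)⁻¹) := by
    have hgeo : Summable (fun m : ℕ => (m : ℝ) * (1/2 : ℝ) ^ m) := by
      simpa using summable_pow_mul_geometric_of_norm_lt_one (R := ℝ) 1
        (r := (1/2 : ℝ))
        (by rw [Real.norm_eq_abs, abs_of_pos (by norm_num : (0:ℝ) < 1/2)]; norm_num)
    refine hgeo.of_nonneg_of_le hanonneg fun m => ?_
    rcases Nat.eq_zero_or_pos m with h | h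
    · subst h; simp
    · have h1 : (2:ℝ) ^ m ≤ ((p m : ℝ)) ^ m :=
        pow_le_pow_left₀ (by norm_num) (hp2 m h) m
      have h2 : (((p m : ℝ)) ^ m)⁻¹ ≤ ((2:ℝ) ^ m)⁻¹ :=
        inv_anti₀ (pow_pos two_pos m) h1
      have h3 : ((2:ℝ) ^ m)⁻¹ = (1/2 : ℝ) ^ m := by
        rw [one_div, inv_pow]
      calc (m : ℝ) * (((p m : ℝ)) ^ m)⁻¹ ≤ (m : ℝ) * ((2:ℝ) ^ m)⁻¹ :=
            mul_le_mul_of_nonneg_left h2 (Nat.cast_nonneg m)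
        _ = (m : ℝ) * (1/2 : ℝ) ^ m := by rw [h3]
  -- strict decrease of |L|
  have hstep : ∀ m : ℕ, 1 ≤ m →
      |r * (p (m+1) : ℝ) - (q (m+1) : ℝ)| < |r * (p m : ℝ) - (q m : ℝ)| := by
    intro m hm
    have h1 := (happrox (m+1) (by omega)).2
    have h2 := hdec (m+1) (by omega)
    simp only [Nat.add_sub_cancel] at h2
    linarith
  have hanti : ∀ k m : ℕ, 1 ≤ k → k < m →
      |r * (p m : ℝ) - (q m : ℝ)| < |r * (p k : ℝ) - (q k : ℝ)| := by
    intro k m hk hkm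
    induction m with
    | zero => omega
    | succ m ih =>
      rcases Nat.lt_or_ge k m with h | h
      · exact (hstep m (by omega)).trans (ih h)
      · have : k = m := by omega
        subst this
        exact hstep k hk
  refine key_lemma (fun m => (m : ℝ) * (((p m : ℝ)) ^ m)⁻¹)
    (fun m => r * (p m : ℝ) - (q m : ℝ)) n _ (by simp) hanonneg hsum ?_ ?_ (by omega) (by ring)
  · intro m hm0 hmn
    rcases Nat.lt_or_ge m n with h | h
    · exact ne_of_gt (hanti m n (by omega) h)
    · have : n < m := by omega
      exact ne_of_lt (hanti n m hn this)
  · intro h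
    have h' : r * (p n : ℝ) - (q n : ℝ) = 0 := h
    have := (happrox n hn).1
    rw [h'] at this
    simp at this
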